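/- If the random vector X = (X_1,…,X_n) in R^n has a coordinate-wise symmetric distribution and finite fourth moments, then V(X) ≤ Λ(X) ≤ 2 max_i E X_i^4 + V(X). -/

import Mathlib

open MeasureTheory ProbabilityTheory Real
open scoped RealInnerProductSpace ENNReal Pointwise

noncomputable section

/-- The uniform (normalized rotation-invariant) probability measure `σ_{n-1}`
on the unit sphere `S^{n-1} ⊆ ℝⁿ`. -/
def sphereUniform (n : ℕ) : Measure (Metric.sphere (0 : EuclideanSpace ℝ (Fin n)) 1) :=
  ((volume : Measure (EuclideanSpace ℝ (Fin n))).toSphere Set.univ)⁻¹ •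
    (volume : Measure (EuclideanSpace ℝ (Fin n))).toSphere

/-- The standard normal distribution function `Φ`. -/
def stdNormalCDF (x : ℝ) : ℝ := ((gaussianReal 0 1) (Set.Iic x)).toReal

/-- The Kolmogorov distance `ρ(F,G) = sup_x |F(x) − G(x)|`. -/
def kolmogorovDist (F G : ℝ → ℝ) : ℝ := ⨆ x : ℝ, |F x - G x|

variable {Ω : Type*} [MeasurableSpace Ω] {n : ℕ}

/-- The distribution function of a real random variable `S` on `(Ω, μ)`. -/
def cdfOf (μ : Measure Ω) (S : Ω → ℝ) (x : ℝ) : ℝ := (μ {ω | S ω ≤ x}).toReal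

/-- `X` is isotropic: the components have mean zero and identity covariance. -/
def IsIsotropic (μ : Measure Ω) (X : Ω → EuclideanSpace ℝ (Fin n)) : Prop :=
  (∀ i, ∫ ω, X ω i ∂μ = 0) ∧
    ∀ i j, ∫ ω, X ω i * X ω j ∂μ = if i = j then (1 : ℝ) else 0

/-- The set of admissible constants `Λ` in the second order correlation condition
`Var(Σ_{i,j} a_{ij} X_i X_j) ≤ Λ Σ_{i,j} a_{ij}²`. -/
def corrSet (μ : Measure Ω) (X : Ω → EuclideanSpace ℝ (Fin n)) : Set ℝ :=
  {L | 0 ≤ L ∧ ∀ a : Fin n → Fin n → ℝ,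
    variance (fun ω => ∑ i, ∑ j, a i j * (X ω i * X ω j)) μ ≤ L * ∑ i, ∑ j, (a i j) ^ 2}

/-- `Λ(X)`: the smallest constant in the second order correlation condition. -/
def corrConst (μ : Measure Ω) (X : Ω → EuclideanSpace ℝ (Fin n)) : ℝ := sInf (corrSet μ X)

/-- `σ₄²(X) = Var(|X|²)/n`. -/
def sigma4sq (μ : Measure Ω) (X : Ω → EuclideanSpace ℝ (Fin n)) : ℝ :=
  (1 / (n : ℝ)) * variance (fun ω => ‖X ω‖ ^ 2) μ

/-- `X` has a coordinate-wise symmetric distribution: for every choice of signs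
`ε ∈ {−1,1}ⁿ`, `(ε₁X₁,…,εₙXₙ)` has the same distribution as `X`. -/
def CoordinatewiseSymmetric (μ : Measure Ω) (X : Ω → EuclideanSpace ℝ (Fin n)) : Prop :=
  ∀ ε : Fin n → ℝ, (∀ i, ε i = 1 ∨ ε i = -1) →
    Measure.map (fun ω => (WithLp.toLp 2 (fun i => ε i * X ω i) : EuclideanSpace ℝ (Fin n))) μ
      = Measure.map X μ

/-- `V(X) = sup_{θ ∈ S^{n-1}} Var(θ₁X₁² + … + θₙXₙ²)`. -/
def Vfunc (μ : Measure Ω) (X : Ω → EuclideanSpace ℝ (Fin n)) : ℝ :=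
  ⨆ θ : Metric.sphere (0 : EuclideanSpace ℝ (Fin n)) 1,
    variance (fun ω => ∑ i, (θ : EuclideanSpace ℝ (Fin n)) i * (X ω i) ^ 2) μ


lemma coord_abs_le_norm (x : EuclideanSpace ℝ (Fin n)) (i : Fin n) : |x i| ≤ ‖x‖ := by
  rw [EuclideanSpace.norm_eq, ← Real.sqrt_sq_eq_abs]
  apply Real.sqrt_le_sqrt
  have := Finset.single_le_sum (f := fun j => ‖x j‖ ^ 2) (fun j _ => by positivity)
    (Finset.mem_univ i)
  simpa [Real.norm_eq_abs, sq_abs] using this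

lemma norm_pow_four (x : EuclideanSpace ℝ (Fin n)) : ‖x‖ ^ 4 = (∑ i, x i ^ 2) ^ 2 := by
  have h : ‖x‖ ^ 2 = ∑ i, x i ^ 2 := by
    rw [EuclideanSpace.norm_eq, Real.sq_sqrt (by positivity)]
    simp [Real.norm_eq_abs, sq_abs]
  calc ‖x‖ ^ 4 = (‖x‖ ^ 2) ^ 2 := by ring
  _ = (∑ i, x i ^ 2) ^ 2 := by rw [h]

lemma integrable_sum_mul_sum {ι κ : Type*} (μ : Measure Ω) (s : Finset ι) (t : Finset κ)
    (c : ι → ℝ) (d : κ → ℝ) (f : ι → Ω → ℝ) (g : κ → Ω → ℝ)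
    (h : ∀ i ∈ s, ∀ j ∈ t, Integrable (fun ω => f i ω * g j ω) μ) :
    Integrable (fun ω => (∑ i ∈ s, c i * f i ω) * (∑ j ∈ t, d j * g j ω)) μ := by
  have he : (fun ω => (∑ i ∈ s, c i * f i ω) * (∑ j ∈ t, d j * g j ω))
      = fun ω => ∑ i ∈ s, ∑ j ∈ t, (c i * d j) * (f i ω * g j ω) := by
    funext ω
    rw [Finset.sum_mul_sum]
    exact Finset.sum_congr rfl fun i _ => Finset.sum_congr rfl fun j _ => by ring
  rw [he]
  exact integrable_finset_sum _ fun i hi => integrable_finset_sum _ fun j hj =>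
    ((h i hi j hj).const_mul _)

lemma integral_sum_mul_sum {ι κ : Type*} (μ : Measure Ω) (s : Finset ι) (t : Finset κ)
    (c : ι → ℝ) (d : κ → ℝ) (f : ι → Ω → ℝ) (g : κ → Ω → ℝ)
    (h : ∀ i ∈ s, ∀ j ∈ t, Integrable (fun ω => f i ω * g j ω) μ) :
    ∫ ω, (∑ i ∈ s, c i * f i ω) * (∑ j ∈ t, d j * g j ω) ∂μ
      = ∑ i ∈ s, ∑ j ∈ t, (c i * d j) * ∫ ω, f i ω * g j ω ∂μ := by
  have he : (fun ω => (∑ i ∈ s, c i * f i ω) * (∑ j ∈ t, d j * g j ω))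
      = fun ω => ∑ i ∈ s, ∑ j ∈ t, (c i * d j) * (f i ω * g j ω) := by
    funext ω
    rw [Finset.sum_mul_sum]
    exact Finset.sum_congr rfl fun i _ => Finset.sum_congr rfl fun j _ => by ring
  rw [he, integral_finset_sum _ fun i hi => integrable_finset_sum _ fun j hj =>
    ((h i hi j hj).const_mul _)]
  refine Finset.sum_congr rfl fun i hi => ?_
  rw [integral_finset_sum _ fun j hj => ((h i hi j hj).const_mul _)]
  exact Finset.sum_congr rfl fun j hj => MeasureTheory.integral_const_mul _ _



lemma sign_flip_integral (μ : Measure Ω) (X : Ω → EuclideanSpace ℝ (Fin n))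
    (hX : Measurable X) (hsym : CoordinatewiseSymmetric μ X) (p : Fin n)
    (g : EuclideanSpace ℝ (Fin n) → ℝ) (hg : Measurable g)
    (hodd : ∀ x : EuclideanSpace ℝ (Fin n),
      g (WithLp.toLp 2 (fun q => (if q = p then (-1 : ℝ) else 1) * x q)) = -g x) :
    ∫ ω, g (X ω) ∂μ = 0 := by
  set ε : Fin n → ℝ := fun q => if q = p then (-1 : ℝ) else 1 with hε
  have hεpm : ∀ i, ε i = 1 ∨ ε i = -1 := fun i => by
    by_cases h : i = p <;> simp [hε, h]
  have hmap := hsym ε hεpm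
  have hmeas : Measurable (fun ω => (WithLp.toLp 2 (fun q => ε q * X ω q) : EuclideanSpace ℝ (Fin n))) := by
    refine (WithLp.measurable_toLp 2 _).comp ?_
    apply measurable_pi_lambda
    intro q
    exact measurable_const.mul ((measurable_pi_apply q).comp ((WithLp.measurable_ofLp 2 _).comp hX))
  have h1 : ∫ ω, g ((WithLp.toLp 2 (fun q => ε q * X ω q) : EuclideanSpace ℝ (Fin n))) ∂μ
      = ∫ ω, g (X ω) ∂μ := by
    have hA := integral_map (μ := μ)
      (φ := fun ω => (WithLp.toLp 2 (fun q => ε q * X ω q) : EuclideanSpace ℝ (Fin n)))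
      hmeas.aemeasurable (f := g) hg.aestronglyMeasurable
    have hB := integral_map (μ := μ) (φ := X) hX.aemeasurable (f := g) hg.aestronglyMeasurable
    rw [hmap] at hA
    exact hA.symm.trans hB
  have h2 : ∫ ω, g ((WithLp.toLp 2 (fun q => ε q * X ω q) : EuclideanSpace ℝ (Fin n))) ∂μ
      = ∫ ω, -g (X ω) ∂μ := by
    refine integral_congr_ae (Filter.Eventually.of_forall fun ω => ?_)
    exact hodd (X ω)
  rw [h2, integral_neg] at h1
  linarith


variable {μ : Measure Ω} {X : Ω → EuclideanSpace ℝ (Fin n)}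

lemma meas_coord (hX : Measurable X) (q : Fin n) : Measurable fun ω => X ω q :=
  (measurable_pi_apply q).comp ((WithLp.measurable_ofLp 2 _).comp hX)

lemma meas_euc (q : Fin n) : Measurable fun x : EuclideanSpace ℝ (Fin n) => x q :=
  (measurable_pi_apply q).comp (WithLp.measurable_ofLp 2 _)

lemma integrable_four (hX : Measurable X) (h4 : Integrable (fun ω => ‖X ω‖ ^ 4) μ)
    (i j k l : Fin n) : Integrable (fun ω => (X ω i * X ω j) * (X ω k * X ω l)) μ := by
  refine h4.mono ((((meas_coord hX i).mul (meas_coord hX j)).mul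
    ((meas_coord hX k).mul (meas_coord hX l))).aestronglyMeasurable) ?_
  refine Filter.Eventually.of_forall fun ω => ?_
  rw [Real.norm_eq_abs, Real.norm_eq_abs, abs_mul, abs_mul, abs_mul,
    abs_of_nonneg (by positivity : (0:ℝ) ≤ ‖X ω‖ ^ 4)]
  calc |X ω i| * |X ω j| * (|X ω k| * |X ω l|)
      ≤ ‖X ω‖ * ‖X ω‖ * (‖X ω‖ * ‖X ω‖) := by
        gcongr <;> first | positivity | exact coord_abs_le_norm _ _
    _ = ‖X ω‖ ^ 4 := by ring

lemma integrable_two [IsFiniteMeasure μ] (hX : Measurable X) (h4 : Integrable (fun ω => ‖X ω‖ ^ 4) μ)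
    (i j : Fin n) : Integrable (fun ω => X ω i * X ω j) μ := by
  refine ((integrable_const 1).add h4).mono
    (((meas_coord hX i).mul (meas_coord hX j)).aestronglyMeasurable) ?_
  refine Filter.Eventually.of_forall fun ω => ?_
  simp only [Pi.add_apply]
  rw [Real.norm_eq_abs, Real.norm_eq_abs, abs_mul,
    abs_of_nonneg (by positivity : (0:ℝ) ≤ 1 + ‖X ω‖ ^ 4)]
  have h1 := coord_abs_le_norm (X ω) i
  have h2 := coord_abs_le_norm (X ω) j
  nlinarith [sq_nonneg (‖X ω‖ ^ 2 - 1), abs_nonneg (X ω i), abs_nonneg (X ω j),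
    norm_nonneg (X ω), mul_le_mul h1 h2 (abs_nonneg _) (norm_nonneg _)]

lemma int2_zero (hX : Measurable X) (hsym : CoordinatewiseSymmetric μ X)
    {i j : Fin n} (hij : i ≠ j) : ∫ ω, X ω i * X ω j ∂μ = 0 := by
  refine sign_flip_integral μ X hX hsym i (fun x => x i * x j)
    ((meas_euc i).mul (meas_euc j)) fun x => ?_
  simp only [WithLp.ofLp_toLp, if_true, if_neg (Ne.symm hij)]
  ring

lemma int4_diag_off (hX : Measurable X) (hsym : CoordinatewiseSymmetric μ X)
    (i : Fin n) {j k : Fin n} (hjk : j ≠ k) :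
    ∫ ω, (X ω i * X ω i) * (X ω j * X ω k) ∂μ = 0 := by
  refine sign_flip_integral μ X hX hsym j (fun x => (x i * x i) * (x j * x k))
    (((meas_euc i).mul (meas_euc i)).mul
      ((meas_euc j).mul (meas_euc k))) fun x => ?_
  rcases eq_or_ne i j with rfl | hij
  · simp only [WithLp.ofLp_toLp, if_true, if_neg (Ne.symm hjk)]; ring
  · simp only [WithLp.ofLp_toLp, if_true, if_neg hij, if_neg (Ne.symm hjk)]; ring

lemma int4_off_off (hX : Measurable X) (hsym : CoordinatewiseSymmetric μ X)
    {i j k l : Fin n} (hij : i ≠ j) (hkl : k ≠ l)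
    (h1 : (k, l) ≠ (i, j)) (h2 : (k, l) ≠ (j, i)) :
    ∫ ω, (X ω i * X ω j) * (X ω k * X ω l) ∂μ = 0 := by
  by_cases hik : i = k
  · subst hik
    have hlj : l ≠ j := fun h => h1 (by rw [h])
    refine sign_flip_integral μ X hX hsym j (fun x => (x i * x j) * (x i * x l))
      (((meas_euc i).mul (meas_euc j)).mul
        ((meas_euc i).mul (meas_euc l))) fun x => ?_
    simp only [WithLp.ofLp_toLp, if_true, if_neg hij, if_neg hlj]
    ring
  · by_cases hil : i = l
    · subst hil
      have hkj : k ≠ j := fun h => h2 (by rw [h])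
      refine sign_flip_integral μ X hX hsym j (fun x => (x i * x j) * (x k * x i))
        (((meas_euc i).mul (meas_euc j)).mul
          ((meas_euc k).mul (meas_euc i))) fun x => ?_
      simp only [WithLp.ofLp_toLp, if_true, if_neg hij, if_neg hkj]
      ring
    · refine sign_flip_integral μ X hX hsym i (fun x => (x i * x j) * (x k * x l))
        (((meas_euc i).mul (meas_euc j)).mul
          ((meas_euc k).mul (meas_euc l))) fun x => ?_
      simp only [WithLp.ofLp_toLp, if_true, if_neg (Ne.symm hij), if_neg (Ne.symm hik),
        if_neg (Ne.symm hil)]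
      ring


lemma sum_sq_le_sq_sum (f : Fin n → ℝ) (hf : ∀ i, 0 ≤ f i) :
    ∑ i, f i ^ 2 ≤ (∑ i, f i) ^ 2 := by
  have h1 : ∀ i ∈ Finset.univ, f i ^ 2 ≤ f i * ∑ j, f j := fun i _ => by
    have h := Finset.single_le_sum (fun j (_ : j ∈ Finset.univ) => hf j) (Finset.mem_univ i)
    rw [pow_two]
    exact mul_le_mul_of_nonneg_left h (hf i)
  calc ∑ i, f i ^ 2 ≤ ∑ i, f i * ∑ j, f j := Finset.sum_le_sum h1
    _ = (∑ i, f i) ^ 2 := by rw [← Finset.sum_mul]; ring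

lemma gtheta_sq_le (θ : EuclideanSpace ℝ (Fin n)) (hθ : ‖θ‖ = 1)
    (x : EuclideanSpace ℝ (Fin n)) : (∑ i, θ i * x i ^ 2) ^ 2 ≤ ‖x‖ ^ 4 := by
  have hcs := Finset.sum_mul_sq_le_sq_mul_sq Finset.univ (fun i => θ i) (fun i => x i ^ 2)
  have hθ2 : ∑ i, θ i ^ 2 = 1 := by
    have h := EuclideanSpace.norm_eq θ
    rw [hθ] at h
    have h2 := Real.sqrt_eq_one.mp h.symm
    simpa [Real.norm_eq_abs, sq_abs] using h2
  have hsum4 : ∑ i, (x i ^ 2) ^ 2 ≤ (∑ i, x i ^ 2) ^ 2 :=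
    sum_sq_le_sq_sum _ (fun i => sq_nonneg _)
  rw [norm_pow_four]
  calc (∑ i, θ i * x i ^ 2) ^ 2 ≤ (∑ i, θ i ^ 2) * ∑ i, (x i ^ 2) ^ 2 := hcs
    _ = ∑ i, (x i ^ 2) ^ 2 := by rw [hθ2, one_mul]
    _ ≤ (∑ i, x i ^ 2) ^ 2 := hsum4

lemma meas_comb (hX : Measurable X) (θ : Fin n → ℝ) :
    Measurable (fun ω => ∑ i, θ i * X ω i ^ 2) :=
  Finset.measurable_sum _ fun i _ => (measurable_const.mul ((meas_coord hX i).pow_const 2))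

lemma memLp_comb (hX : Measurable X) (h4 : Integrable (fun ω => ‖X ω‖ ^ 4) μ)
    (θ : EuclideanSpace ℝ (Fin n)) (hθ : ‖θ‖ = 1) :
    MemLp (fun ω => ∑ i, θ i * X ω i ^ 2) 2 μ := by
  rw [memLp_two_iff_integrable_sq (meas_comb hX θ).aestronglyMeasurable]
  refine h4.mono ((meas_comb hX θ).pow_const 2).aestronglyMeasurable
    (Filter.Eventually.of_forall fun ω => ?_)
  rw [Real.norm_eq_abs, Real.norm_eq_abs, abs_of_nonneg (sq_nonneg _),
    abs_of_nonneg (by positivity : (0:ℝ) ≤ ‖X ω‖ ^ 4)]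
  exact gtheta_sq_le θ hθ (X ω)

lemma var_comb_le [IsProbabilityMeasure μ] (hX : Measurable X)
    (h4 : Integrable (fun ω => ‖X ω‖ ^ 4) μ)
    (θ : EuclideanSpace ℝ (Fin n)) (hθ : ‖θ‖ = 1) :
    variance (fun ω => ∑ i, θ i * X ω i ^ 2) μ ≤ ∫ ω, ‖X ω‖ ^ 4 ∂μ := by
  have hmem := memLp_comb hX h4 θ hθ
  rw [variance_eq_sub hmem]
  have hintsq : Integrable (fun ω => (∑ i, θ i * X ω i ^ 2) ^ 2) μ :=
    (memLp_two_iff_integrable_sq (meas_comb hX θ).aestronglyMeasurable).mp hmem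
  have h2 : ∫ ω, ((fun ω => ∑ i, θ i * X ω i ^ 2) ^ 2) ω ∂μ ≤ ∫ ω, ‖X ω‖ ^ 4 ∂μ := by
    simp only [Pi.pow_apply]
    exact integral_mono hintsq h4 fun ω => gtheta_sq_le θ hθ (X ω)
  have h3 : (0:ℝ) ≤ (∫ ω, (fun ω => ∑ i, θ i * X ω i ^ 2) ω ∂μ) ^ 2 := sq_nonneg _
  simp only [] at h2 h3 ⊢
  linarith

lemma bddAbove_var_family [IsProbabilityMeasure μ] (hX : Measurable X)
    (h4 : Integrable (fun ω => ‖X ω‖ ^ 4) μ) :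
    BddAbove (Set.range fun θ : Metric.sphere (0 : EuclideanSpace ℝ (Fin n)) 1 =>
      variance (fun ω => ∑ i, (θ : EuclideanSpace ℝ (Fin n)) i * (X ω i) ^ 2) μ) := by
  refine ⟨∫ ω, ‖X ω‖ ^ 4 ∂μ, ?_⟩
  rintro _ ⟨θ, rfl⟩
  exact var_comb_le hX h4 θ (mem_sphere_zero_iff_norm.mp θ.2)

lemma varD_le [IsProbabilityMeasure μ] (hX : Measurable X)
    (h4 : Integrable (fun ω => ‖X ω‖ ^ 4) μ) (c : Fin n → ℝ) :
    variance (fun ω => ∑ i, c i * (X ω i * X ω i)) μ ≤ Vfunc μ X * ∑ i, c i ^ 2 := by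
  rcases eq_or_ne (∑ i, c i ^ 2) 0 with hS | hS
  · have hc : ∀ i ∈ Finset.univ, c i ^ 2 = (0:ℝ) :=
      (Finset.sum_eq_zero_iff_of_nonneg fun i _ => sq_nonneg _).mp hS
    have hc' : ∀ i : Fin n, c i = 0 := fun i => by
      have := hc i (Finset.mem_univ i); exact pow_eq_zero_iff two_ne_zero |>.mp this
    have hfun : (fun ω => ∑ i, c i * (X ω i * X ω i)) = fun _ => (0:ℝ) := by
      funext ω; exact Finset.sum_eq_zero fun i _ => by rw [hc' i, zero_mul]
    rw [hfun, hS, mul_zero]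
    have : variance (fun _ : Ω => (0:ℝ)) μ = 0 := by
      rw [variance_eq_sub (memLp_const 0)]
      simp
    rw [this]
  · have hS0 : 0 ≤ ∑ i, c i ^ 2 := Finset.sum_nonneg fun i _ => sq_nonneg _
    have hSpos : 0 < ∑ i, c i ^ 2 := lt_of_le_of_ne hS0 (Ne.symm hS)
    set t : ℝ := Real.sqrt (∑ i, c i ^ 2) with ht
    have htpos : 0 < t := Real.sqrt_pos.mpr hSpos
    have ht2 : t ^ 2 = ∑ i, c i ^ 2 := Real.sq_sqrt hS0
    set θ : EuclideanSpace ℝ (Fin n) := WithLp.toLp 2 (fun i => c i / t) with hθdef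
    have hθsum : ∑ i, θ i ^ 2 = 1 := by
      have : ∑ i, (c i / t) ^ 2 = (∑ i, c i ^ 2) / t ^ 2 := by
        simp [div_pow, Finset.sum_div]
      simp only [hθdef, WithLp.ofLp_toLp]
      rw [this, ht2, div_self hS]
    have hθnorm : ‖θ‖ = 1 := by
      rw [EuclideanSpace.norm_eq]
      have : ∑ i, ‖θ i‖ ^ 2 = 1 := by
        simpa [Real.norm_eq_abs, sq_abs] using hθsum
      rw [this, Real.sqrt_one]
    have hfun : (fun ω => ∑ i, c i * (X ω i * X ω i))
        = t • (fun ω => ∑ i, θ i * X ω i ^ 2) := by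
      funext ω
      simp only [Pi.smul_apply, smul_eq_mul, Finset.mul_sum]
      refine Finset.sum_congr rfl fun i _ => ?_
      simp only [hθdef, WithLp.ofLp_toLp]
      rw [pow_two]
      field_simp
    rw [hfun, variance_smul, ht2]
    have hle : variance (fun ω => ∑ i, θ i * X ω i ^ 2) μ ≤ Vfunc μ X := by
      have hmem : θ ∈ Metric.sphere (0 : EuclideanSpace ℝ (Fin n)) 1 :=
        mem_sphere_zero_iff_norm.mpr hθnorm
      exact le_ciSup (bddAbove_var_family hX h4) (⟨θ, hmem⟩ :
        Metric.sphere (0 : EuclideanSpace ℝ (Fin n)) 1)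
    have := mul_le_mul_of_nonneg_left hle hS0
    linarith [this]

lemma mul_bound_key (s B m M : ℝ) (hsB : s ≤ B) (hB : 0 ≤ B) (hm : 0 ≤ m) (hmM : m ≤ M) :
    s * m ≤ B * M := by
  nlinarith [mul_nonneg (sub_nonneg.2 hsB) hm, mul_nonneg hB (sub_nonneg.2 hmM)]

lemma SOO_le [IsProbabilityMeasure μ] (hn : 1 ≤ n) (hX : Measurable X)
    (h4 : Integrable (fun ω => ‖X ω‖ ^ 4) μ) (hsym : CoordinatewiseSymmetric μ X)
    (c : Fin n × Fin n → ℝ) :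
    ∑ p ∈ (Finset.univ : Finset (Fin n)).offDiag,
      ∑ q ∈ (Finset.univ : Finset (Fin n)).offDiag,
        (c p * c q) * ∫ ω, (X ω p.1 * X ω p.2) * (X ω q.1 * X ω q.2) ∂μ
    ≤ 2 * (⨆ i : Fin n, ∫ ω, (X ω i) ^ 4 ∂μ)
        * ∑ p ∈ (Finset.univ : Finset (Fin n)).offDiag, c p ^ 2 := by
  classical
  have hbddM : BddAbove (Set.range fun i : Fin n => ∫ ω, (X ω i) ^ 4 ∂μ) :=
    (Set.finite_range _).bddAbove
  have hXi4 : ∀ q : Fin n, Integrable (fun ω => X ω q ^ 4) μ := fun q =>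
    (integrable_four hX h4 q q q q).congr (Filter.Eventually.of_forall fun ω => by ring)
  have hMle : ∀ q : Fin n, ∫ ω, X ω q ^ 4 ∂μ ≤ ⨆ i : Fin n, ∫ ω, (X ω i) ^ 4 ∂μ :=
    fun q => le_ciSup hbddM q
  have hM0 : 0 ≤ ⨆ i : Fin n, ∫ ω, (X ω i) ^ 4 ∂μ :=
    le_trans (integral_nonneg fun ω => by positivity) (hMle ⟨0, hn⟩)
  set M := ⨆ i : Fin n, ∫ ω, (X ω i) ^ 4 ∂μ with hMdef
  set od := (Finset.univ : Finset (Fin n)).offDiag with hod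
  set m : Fin n × Fin n → ℝ :=
    fun p => ∫ ω, (X ω p.1 * X ω p.2) * (X ω p.1 * X ω p.2) ∂μ with hmdef
  have hm0 : ∀ p, 0 ≤ m p := fun p => integral_nonneg fun ω => mul_self_nonneg _
  have hmM : ∀ p, m p ≤ M := by
    intro p
    have hpt : ∀ ω, (X ω p.1 * X ω p.2) * (X ω p.1 * X ω p.2)
        ≤ (X ω p.1 ^ 4 + X ω p.2 ^ 4) / 2 := fun ω => by
      nlinarith [sq_nonneg (X ω p.1 ^ 2 - X ω p.2 ^ 2)]
    have h1 : m p ≤ ∫ ω, (X ω p.1 ^ 4 + X ω p.2 ^ 4) / 2 ∂μ :=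
      integral_mono (integrable_four hX h4 p.1 p.2 p.1 p.2)
        (((hXi4 p.1).add (hXi4 p.2)).div_const 2) hpt
    have h2 : ∫ ω, (X ω p.1 ^ 4 + X ω p.2 ^ 4) / 2 ∂μ
        = ((∫ ω, X ω p.1 ^ 4 ∂μ) + ∫ ω, X ω p.2 ^ 4 ∂μ) / 2 := by
      rw [integral_div, integral_add (hXi4 p.1) (hXi4 p.2)]
    have h3 := hMle p.1
    have h4' := hMle p.2
    rw [h2] at h1
    linarith
  have hinner : ∀ p ∈ od,
      ∑ q ∈ od, (c p * c q) * ∫ ω, (X ω p.1 * X ω p.2) * (X ω q.1 * X ω q.2) ∂μ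
        = (c p * c p + c p * c p.swap) * m p := by
    intro p hp
    obtain ⟨-, -, hne⟩ := Finset.mem_offDiag.mp hp
    have hswap_mem : p.swap ∈ od :=
      Finset.mem_offDiag.mpr ⟨Finset.mem_univ _, Finset.mem_univ _, by
        simp only [Prod.fst_swap, Prod.snd_swap]; exact hne.symm⟩
    have hswap_ne : p.swap ≠ p := by
      intro h
      apply hne
      have := congrArg Prod.fst h
      simp only [Prod.fst_swap] at this
      exact this.symm
    rw [← Finset.add_sum_erase od _ hp,
      ← Finset.add_sum_erase _ _ (Finset.mem_erase.mpr ⟨hswap_ne, hswap_mem⟩)]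
    have hrest : ∑ q ∈ (od.erase p).erase p.swap,
        (c p * c q) * ∫ ω, (X ω p.1 * X ω p.2) * (X ω q.1 * X ω q.2) ∂μ = 0 := by
      refine Finset.sum_eq_zero fun q hq => ?_
      obtain ⟨hqsw, hq'⟩ := Finset.mem_erase.mp hq
      obtain ⟨hqp, hqod⟩ := Finset.mem_erase.mp hq'
      obtain ⟨-, -, hqne⟩ := Finset.mem_offDiag.mp hqod
      have h1 : (q.1, q.2) ≠ (p.1, p.2) := by
        simpa [Prod.ext_iff] using hqp
      have h2 : (q.1, q.2) ≠ (p.2, p.1) := by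
        have : p.swap = (p.2, p.1) := rfl
        rw [this] at hqsw
        simpa [Prod.ext_iff] using hqsw
      rw [int4_off_off hX hsym hne hqne h1 h2, mul_zero]
    have hswap_int : ∫ ω, (X ω p.1 * X ω p.2) * (X ω p.swap.1 * X ω p.swap.2) ∂μ = m p := by
      simp only [Prod.fst_swap, Prod.snd_swap, hmdef]
      refine integral_congr_ae (Filter.Eventually.of_forall fun ω => by ring)
    rw [hrest, hswap_int]
    simp only [hmdef]
    ring
  rw [Finset.sum_congr rfl hinner]
  have hbound : ∀ p ∈ od, (c p * c p + c p * c p.swap) * m p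
      ≤ (3 / 2 * c p ^ 2 + 1 / 2 * c p.swap ^ 2) * M := fun p _ =>
    mul_bound_key _ _ _ _ (by nlinarith [sq_nonneg (c p - c p.swap)])
      (by positivity) (hm0 p) (hmM p)
  calc ∑ p ∈ od, (c p * c p + c p * c p.swap) * m p
      ≤ ∑ p ∈ od, (3 / 2 * c p ^ 2 + 1 / 2 * c p.swap ^ 2) * M :=
        Finset.sum_le_sum hbound
    _ = 2 * M * ∑ p ∈ od, c p ^ 2 := by
        have hswapsum : ∑ p ∈ od, c p.swap ^ 2 = ∑ p ∈ od, c p ^ 2 := by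
          refine Finset.sum_equiv (Equiv.prodComm (Fin n) (Fin n)) (fun p => ?_) (fun p _ => ?_)
          · simp only [hod, Finset.mem_offDiag, Finset.mem_univ, true_and,
              Equiv.prodComm_apply, Prod.fst_swap, Prod.snd_swap]
            exact ⟨Ne.symm, Ne.symm⟩
          · rfl
        rw [← Finset.sum_mul, Finset.sum_add_distrib, ← Finset.mul_sum, ← Finset.mul_sum,
          hswapsum]
        ring

lemma var_split [IsProbabilityMeasure μ] (hX : Measurable X)
    (h4 : Integrable (fun ω => ‖X ω‖ ^ 4) μ) (hsym : CoordinatewiseSymmetric μ X)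
    (a : Fin n → Fin n → ℝ) :
    variance (fun ω => ∑ i, ∑ j, a i j * (X ω i * X ω j)) μ
      = variance (fun ω => ∑ i, a i i * (X ω i * X ω i)) μ
        + ∑ p ∈ (Finset.univ : Finset (Fin n)).offDiag,
            ∑ q ∈ (Finset.univ : Finset (Fin n)).offDiag,
              (a p.1 p.2 * a q.1 q.2) * ∫ ω, (X ω p.1 * X ω p.2) * (X ω q.1 * X ω q.2) ∂μ := by
  classical
  have hYfun : (fun ω => ∑ i, ∑ j, a i j * (X ω i * X ω j))
      = fun ω => (∑ i, a i i * (X ω i * X ω i))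
          + ∑ p ∈ (Finset.univ : Finset (Fin n)).offDiag, a p.1 p.2 * (X ω p.1 * X ω p.2) := by
    funext ω
    rw [← Finset.sum_product' (f := fun i j => a i j * (X ω i * X ω j)),
      ← Finset.diag_union_offDiag (Finset.univ : Finset (Fin n)),
      Finset.sum_union (Finset.disjoint_diag_offDiag _), Finset.sum_diag]
  rw [hYfun]
  -- integrability facts
  have hF4 : ∀ p q : Fin n × Fin n,
      Integrable (fun ω => (X ω p.1 * X ω p.2) * (X ω q.1 * X ω q.2)) μ :=
    fun p q => integrable_four hX h4 p.1 p.2 q.1 q.2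
  have hIntD : Integrable (fun ω => ∑ i, a i i * (X ω i * X ω i)) μ :=
    integrable_finset_sum _ fun i _ => (integrable_two hX h4 i i).const_mul _
  have hIntO : Integrable
      (fun ω => ∑ p ∈ (Finset.univ : Finset (Fin n)).offDiag,
        a p.1 p.2 * (X ω p.1 * X ω p.2)) μ :=
    integrable_finset_sum _ fun p _ => (integrable_two hX h4 p.1 p.2).const_mul _
  have hmeasD : Measurable (fun ω => ∑ i, a i i * (X ω i * X ω i)) :=
    Finset.measurable_sum _ fun i _ =>
      measurable_const.mul ((meas_coord hX i).mul (meas_coord hX i))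
  have hmeasO : Measurable (fun ω => ∑ p ∈ (Finset.univ : Finset (Fin n)).offDiag,
      a p.1 p.2 * (X ω p.1 * X ω p.2)) :=
    Finset.measurable_sum _ fun p _ =>
      measurable_const.mul ((meas_coord hX p.1).mul (meas_coord hX p.2))
  -- rewrite D as a sum over the diagonal to use the generic product lemmas
  have hDdiag : (fun ω => ∑ i, a i i * (X ω i * X ω i))
      = fun ω => ∑ p ∈ (Finset.univ : Finset (Fin n)).diag,
          a p.1 p.2 * (X ω p.1 * X ω p.2) := by
    funext ω
    rw [Finset.sum_diag]
  have hIntDD : Integrable (fun ω => (∑ i, a i i * (X ω i * X ω i))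
      * (∑ i, a i i * (X ω i * X ω i))) μ := by
    refine (integrable_sum_mul_sum μ (Finset.univ : Finset (Fin n)).diag
      (Finset.univ : Finset (Fin n)).diag (fun p => a p.1 p.2) (fun p => a p.1 p.2)
      (fun p ω => X ω p.1 * X ω p.2) (fun p ω => X ω p.1 * X ω p.2)
      (fun p _ q _ => hF4 p q)).congr (Filter.Eventually.of_forall fun ω => ?_)
    simp only [Finset.sum_diag]
  have hIntOO : Integrable (fun ω =>
      (∑ p ∈ (Finset.univ : Finset (Fin n)).offDiag, a p.1 p.2 * (X ω p.1 * X ω p.2))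
      * (∑ p ∈ (Finset.univ : Finset (Fin n)).offDiag, a p.1 p.2 * (X ω p.1 * X ω p.2))) μ :=
    integrable_sum_mul_sum μ _ _ _ _ _ _ fun p _ q _ => hF4 p q
  have hIntDO : Integrable (fun ω => (∑ i, a i i * (X ω i * X ω i))
      * (∑ p ∈ (Finset.univ : Finset (Fin n)).offDiag,
          a p.1 p.2 * (X ω p.1 * X ω p.2))) μ := by
    refine (integrable_sum_mul_sum μ (Finset.univ : Finset (Fin n)).diag
      (Finset.univ : Finset (Fin n)).offDiag (fun p => a p.1 p.2) (fun p => a p.1 p.2)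
      (fun p ω => X ω p.1 * X ω p.2) (fun p ω => X ω p.1 * X ω p.2)
      (fun p _ q _ => hF4 p q)).congr (Filter.Eventually.of_forall fun ω => ?_)
    simp only [Finset.sum_diag]
  have hIntD2 : Integrable (fun ω => (∑ i, a i i * (X ω i * X ω i)) ^ 2) μ :=
    hIntDD.congr (Filter.Eventually.of_forall fun ω => (pow_two _).symm)
  -- MemLp facts
  have hmemD : MemLp (fun ω => ∑ i, a i i * (X ω i * X ω i)) 2 μ := by
    rw [memLp_two_iff_integrable_sq hmeasD.aestronglyMeasurable]
    exact hIntD2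
  have hmemO : MemLp (fun ω => ∑ p ∈ (Finset.univ : Finset (Fin n)).offDiag,
      a p.1 p.2 * (X ω p.1 * X ω p.2)) 2 μ := by
    rw [memLp_two_iff_integrable_sq hmeasO.aestronglyMeasurable]
    exact hIntOO.congr (Filter.Eventually.of_forall fun ω => (pow_two _).symm)
  have hmemY : MemLp (fun ω => (∑ i, a i i * (X ω i * X ω i))
      + ∑ p ∈ (Finset.univ : Finset (Fin n)).offDiag, a p.1 p.2 * (X ω p.1 * X ω p.2)) 2 μ :=
    hmemD.add hmemO
  -- key vanishing integrals
  have hIntOzero : ∫ ω, (∑ p ∈ (Finset.univ : Finset (Fin n)).offDiag,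
      a p.1 p.2 * (X ω p.1 * X ω p.2)) ∂μ = 0 := by
    rw [integral_finset_sum _ fun p _ => (integrable_two hX h4 p.1 p.2).const_mul _]
    refine Finset.sum_eq_zero fun p hp => ?_
    obtain ⟨-, -, hne⟩ := Finset.mem_offDiag.mp hp
    rw [MeasureTheory.integral_const_mul, int2_zero hX hsym hne, mul_zero]
  have hIntDOzero : ∫ ω, (∑ i, a i i * (X ω i * X ω i))
      * (∑ p ∈ (Finset.univ : Finset (Fin n)).offDiag, a p.1 p.2 * (X ω p.1 * X ω p.2)) ∂μ
      = 0 := by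
    have hval : ∫ ω, (∑ p ∈ (Finset.univ : Finset (Fin n)).diag,
        a p.1 p.2 * (X ω p.1 * X ω p.2))
        * (∑ p ∈ (Finset.univ : Finset (Fin n)).offDiag, a p.1 p.2 * (X ω p.1 * X ω p.2)) ∂μ
        = ∑ p ∈ (Finset.univ : Finset (Fin n)).diag,
            ∑ q ∈ (Finset.univ : Finset (Fin n)).offDiag,
              (a p.1 p.2 * a q.1 q.2) * ∫ ω, (X ω p.1 * X ω p.2) * (X ω q.1 * X ω q.2) ∂μ :=
      integral_sum_mul_sum μ _ _ _ _ _ _ fun p _ q _ => hF4 p q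
    have hcongr : ∫ ω, (∑ i, a i i * (X ω i * X ω i))
        * (∑ p ∈ (Finset.univ : Finset (Fin n)).offDiag, a p.1 p.2 * (X ω p.1 * X ω p.2)) ∂μ
        = ∫ ω, (∑ p ∈ (Finset.univ : Finset (Fin n)).diag, a p.1 p.2 * (X ω p.1 * X ω p.2))
          * (∑ p ∈ (Finset.univ : Finset (Fin n)).offDiag, a p.1 p.2 * (X ω p.1 * X ω p.2)) ∂μ := by
      refine integral_congr_ae (Filter.Eventually.of_forall fun ω => ?_)
      simp only [Finset.sum_diag]
    rw [hcongr, hval]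
    refine Finset.sum_eq_zero fun p hp => Finset.sum_eq_zero fun q hq => ?_
    obtain ⟨-, hpe⟩ := Finset.mem_diag.mp hp
    obtain ⟨-, -, hqne⟩ := Finset.mem_offDiag.mp hq
    rw [← hpe, int4_diag_off hX hsym p.1 hqne, mul_zero]
  have hOOval : ∫ ω, (∑ p ∈ (Finset.univ : Finset (Fin n)).offDiag,
      a p.1 p.2 * (X ω p.1 * X ω p.2))
      * (∑ p ∈ (Finset.univ : Finset (Fin n)).offDiag, a p.1 p.2 * (X ω p.1 * X ω p.2)) ∂μ
      = ∑ p ∈ (Finset.univ : Finset (Fin n)).offDiag,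
          ∑ q ∈ (Finset.univ : Finset (Fin n)).offDiag,
            (a p.1 p.2 * a q.1 q.2) * ∫ ω, (X ω p.1 * X ω p.2) * (X ω q.1 * X ω q.2) ∂μ :=
    integral_sum_mul_sum μ _ _ _ _ _ _ fun p _ q _ => hF4 p q
  -- expand the square of the sum
  have hY2 : ∫ ω, ((∑ i, a i i * (X ω i * X ω i))
      + ∑ p ∈ (Finset.univ : Finset (Fin n)).offDiag, a p.1 p.2 * (X ω p.1 * X ω p.2)) ^ 2 ∂μ
      = ∫ ω, ((∑ i, a i i * (X ω i * X ω i)) ^ 2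
          + (2 * ((∑ i, a i i * (X ω i * X ω i))
              * (∑ p ∈ (Finset.univ : Finset (Fin n)).offDiag,
                  a p.1 p.2 * (X ω p.1 * X ω p.2)))
            + (∑ p ∈ (Finset.univ : Finset (Fin n)).offDiag, a p.1 p.2 * (X ω p.1 * X ω p.2))
              * (∑ p ∈ (Finset.univ : Finset (Fin n)).offDiag,
                  a p.1 p.2 * (X ω p.1 * X ω p.2)))) ∂μ :=
    integral_congr_ae (Filter.Eventually.of_forall fun ω => by ring)
  rw [variance_eq_sub hmemY, variance_eq_sub hmemD]
  simp only [Pi.pow_apply]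
  have hg : Integrable (fun ω => 2 * ((∑ i, a i i * (X ω i * X ω i))
      * (∑ p ∈ (Finset.univ : Finset (Fin n)).offDiag, a p.1 p.2 * (X ω p.1 * X ω p.2)))
      + (∑ p ∈ (Finset.univ : Finset (Fin n)).offDiag, a p.1 p.2 * (X ω p.1 * X ω p.2))
        * (∑ p ∈ (Finset.univ : Finset (Fin n)).offDiag,
            a p.1 p.2 * (X ω p.1 * X ω p.2))) μ :=
    (hIntDO.const_mul 2).add hIntOO
  rw [hY2, integral_add hIntD2 hg,
    integral_add (hIntDO.const_mul 2) hIntOO, MeasureTheory.integral_const_mul, hIntDOzero,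
    integral_add hIntD hIntO, hIntOzero, add_zero, hOOval]
  ring


/-- If `X` has a coordinate-wise symmetric distribution and finite fourth
moments, then `V(X) ≤ Λ(X) ≤ 2 maxᵢ E Xᵢ⁴ + V(X)`. -/
theorem statement7 {Ω : Type*} [MeasurableSpace Ω] (μ : Measure Ω) [IsProbabilityMeasure μ]
    {n : ℕ} (hn : 1 ≤ n) (X : Ω → EuclideanSpace ℝ (Fin n)) (hX : Measurable X)
    (h4 : Integrable (fun ω => ‖X ω‖ ^ 4) μ)
    (hsym : CoordinatewiseSymmetric μ X) :
    Vfunc μ X ≤ corrConst μ X ∧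
      corrConst μ X ≤ 2 * (⨆ i : Fin n, ∫ ω, (X ω i) ^ 4 ∂μ) + Vfunc μ X := by
  classical
  have hbddM : BddAbove (Set.range fun i : Fin n => ∫ ω, (X ω i) ^ 4 ∂μ) :=
    (Set.finite_range _).bddAbove
  have hM0 : 0 ≤ ⨆ i : Fin n, ∫ ω, (X ω i) ^ 4 ∂μ :=
    le_trans (integral_nonneg fun ω => by positivity) (le_ciSup hbddM (⟨0, hn⟩ : Fin n))
  have hθ0 : (EuclideanSpace.single (⟨0, hn⟩ : Fin n) (1 : ℝ))
      ∈ Metric.sphere (0 : EuclideanSpace ℝ (Fin n)) 1 := by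
    rw [mem_sphere_zero_iff_norm, EuclideanSpace.norm_single]
    norm_num
  haveI : Nonempty (Metric.sphere (0 : EuclideanSpace ℝ (Fin n)) 1) := ⟨⟨_, hθ0⟩⟩
  have hbddV := bddAbove_var_family hX h4
  have hV0 : 0 ≤ Vfunc μ X :=
    le_trans (variance_nonneg _ _) (le_ciSup hbddV ⟨_, hθ0⟩)
  have hmem : 2 * (⨆ i : Fin n, ∫ ω, (X ω i) ^ 4 ∂μ) + Vfunc μ X ∈ corrSet μ X := by
    refine ⟨by linarith, fun a => ?_⟩
    have hsplit := var_split hX h4 hsym a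
    have hD := varD_le hX h4 (fun i => a i i)
    have hO := SOO_le hn hX h4 hsym (fun p => a p.1 p.2)
    have hsum : ∑ i, ∑ j, a i j ^ 2 = (∑ i, a i i ^ 2)
        + ∑ p ∈ (Finset.univ : Finset (Fin n)).offDiag, a p.1 p.2 ^ 2 := by
      rw [← Finset.sum_product' (f := fun i j => a i j ^ 2),
        ← Finset.diag_union_offDiag (Finset.univ : Finset (Fin n)),
        Finset.sum_union (Finset.disjoint_diag_offDiag _), Finset.sum_diag]
    have hod0 : 0 ≤ ∑ p ∈ (Finset.univ : Finset (Fin n)).offDiag, a p.1 p.2 ^ 2 :=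
      Finset.sum_nonneg fun p _ => sq_nonneg _
    have hdg0 : 0 ≤ ∑ i, a i i ^ 2 := Finset.sum_nonneg fun i _ => sq_nonneg _
    rw [hsplit, hsum]
    nlinarith [mul_nonneg hM0 hdg0, mul_nonneg hV0 hod0]
  have hbddBelow : BddBelow (corrSet μ X) := ⟨0, fun L hL => hL.1⟩
  constructor
  · refine ciSup_le fun θ => ?_
    refine le_csInf ⟨_, hmem⟩ fun L hL => ?_
    obtain ⟨hL0, hLa⟩ := hL
    have hkey := hLa (fun i j => if i = j then (θ : EuclideanSpace ℝ (Fin n)) i else 0)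
    have hfun : (fun ω => ∑ i, ∑ j,
        (if i = j then (θ : EuclideanSpace ℝ (Fin n)) i else 0) * (X ω i * X ω j))
        = fun ω => ∑ i, (θ : EuclideanSpace ℝ (Fin n)) i * (X ω i) ^ 2 := by
      funext ω
      refine Finset.sum_congr rfl fun i _ => ?_
      rw [Finset.sum_eq_single_of_mem i (Finset.mem_univ i)]
      · rw [if_pos rfl]; ring
      · intro j _ hji
        rw [if_neg (fun h => hji h.symm), zero_mul]
    have hcoef : ∑ i, ∑ j,
        (if i = j then (θ : EuclideanSpace ℝ (Fin n)) i else 0) ^ 2 = 1 := by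
      have hrow : ∀ i : Fin n, ∑ j,
          (if i = j then (θ : EuclideanSpace ℝ (Fin n)) i else 0) ^ 2
          = (θ : EuclideanSpace ℝ (Fin n)) i ^ 2 := fun i => by
        rw [Finset.sum_eq_single_of_mem i (Finset.mem_univ i)]
        · rw [if_pos rfl]
        · intro j _ hji
          rw [if_neg (fun h => hji h.symm)]
          exact zero_pow two_ne_zero
      rw [Finset.sum_congr rfl fun i _ => hrow i]
      have hnorm := mem_sphere_zero_iff_norm.mp θ.2
      have h := EuclideanSpace.norm_eq (θ : EuclideanSpace ℝ (Fin n))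
      rw [hnorm] at h
      have h2 := Real.sqrt_eq_one.mp h.symm
      simpa [Real.norm_eq_abs, sq_abs] using h2
    rw [hfun, hcoef, mul_one] at hkey
    exact hkey
  · exact csInf_le hbddBelow hmem
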